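/- Let T be a triangulated category with a semi-orthogonal decomposition T = ⟨N₁, …, Nₙ⟩. Then the Grothendieck group K₀(T) decomposes as a direct sum K₀(N₁) ⊕ ⋯ ⊕ K₀(Nₙ), with the isomorphism induced by the inclusions Nᵣ ⊆ T. -/

import Mathlib

open CategoryTheory Limits Pretriangulated ZeroObject DirectSum

universe v u

variable (C : Type u) [Category.{v} C] [Preadditive C] [HasZeroObject C]
  [HasShift C ℤ] [∀ n : ℤ, (CategoryTheory.shiftFunctor C n).Additive]
  [Pretriangulated C]

/-- The subgroup of relations `[Y] = [X] + [Z]` coming from distinguished triangles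
`X → Y → Z → X[1]`. -/
def K0relations : AddSubgroup (FreeAbelianGroup C) :=
  AddSubgroup.closure {x | ∃ Tr : Triangle C, Tr ∈ (distTriang C) ∧
    x = FreeAbelianGroup.of Tr.obj₂ - FreeAbelianGroup.of Tr.obj₁ -
      FreeAbelianGroup.of Tr.obj₃}

/-- The Grothendieck group `K₀` of a triangulated category: the free abelian group on
the objects modulo the relations `[Y] = [X] + [Z]` for distinguished triangles. -/
abbrev K0 : Type u := FreeAbelianGroup C ⧸ K0relations C

variable {C}

/-- Relations for the Grothendieck group of a full triangulated subcategory on a class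
of objects `S`: the triangles of `C` all of whose objects lie in `S`. -/
def K0relationsIn (S : Set C) : AddSubgroup (FreeAbelianGroup ↥S) :=
  AddSubgroup.closure {x | ∃ Tr : Triangle C, Tr ∈ (distTriang C) ∧
    ∃ (h1 : Tr.obj₁ ∈ S) (h2 : Tr.obj₂ ∈ S) (h3 : Tr.obj₃ ∈ S),
    x = FreeAbelianGroup.of (⟨Tr.obj₂, h2⟩ : ↥S) - FreeAbelianGroup.of ⟨Tr.obj₁, h1⟩ -
      FreeAbelianGroup.of ⟨Tr.obj₃, h3⟩}

/-- The Grothendieck group of the full triangulated subcategory on `S`. -/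
abbrev K0In (S : Set C) : Type u := FreeAbelianGroup ↥S ⧸ K0relationsIn S

/-- The homomorphism `FreeAbelianGroup S → K₀(C)` sending a generator to the class of
the underlying object. -/
def toK0 (S : Set C) : FreeAbelianGroup ↥S →+ K0 C :=
  (QuotientAddGroup.mk' (K0relations C)).comp
    (FreeAbelianGroup.lift (fun x => FreeAbelianGroup.of (x : C)))

/-- The homomorphism `K₀(N) → K₀(C)` induced by the inclusion `N ⊆ C` of a full
triangulated subcategory on the class of objects `S`. -/
def K0inclusion (S : Set C) : K0In S →+ K0 C :=
  QuotientAddGroup.lift (K0relationsIn S) (toK0 S) (by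
    intro x hx
    have hle : K0relationsIn S ≤ (toK0 S).ker := by
      refine (AddSubgroup.closure_le _).mpr ?_
      rintro x ⟨Tr, hTr, h1, h2, h3, rfl⟩
      have : toK0 S (FreeAbelianGroup.of (⟨Tr.obj₂, h2⟩ : ↥S) -
          FreeAbelianGroup.of ⟨Tr.obj₁, h1⟩ - FreeAbelianGroup.of ⟨Tr.obj₃, h3⟩) = 0 := by
        simp only [toK0, map_sub, AddMonoidHom.comp_apply, FreeAbelianGroup.lift_apply_of]
        rw [← map_sub, ← map_sub, QuotientAddGroup.mk'_apply, QuotientAddGroup.eq_zero_iff]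
        exact AddSubgroup.subset_closure ⟨Tr, hTr, rfl⟩
      exact this
    exact hle hx)

/-- The map `⊕ᵣ K₀(Nᵣ) → K₀(C)` induced by the inclusions. -/
noncomputable def sodK0Map {n : ℕ} (N : Fin n → Set C) :
    (⨁ r : Fin n, K0In (N r)) →+ K0 C :=
  DirectSum.toAddMonoid (fun r => K0inclusion (N r))

/-- A class of objects of `C` forming a full triangulated subcategory. -/
structure IsTriangulatedSet (P : Set C) : Prop where
  isoClosed : ∀ {X Y : C}, (X ≅ Y) → X ∈ P → Y ∈ P
  zero : (0 : C) ∈ P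
  shift : ∀ (X : C) (n : ℤ), X ∈ P → X⟦n⟧ ∈ P
  ext₂ : ∀ (Tr : Triangle C), Tr ∈ (distTriang C) → Tr.obj₁ ∈ P → Tr.obj₃ ∈ P →
    Tr.obj₂ ∈ P

/-- `sodFilt f r` is the `r`-th step `T_r` of the filtration associated to a
semi-orthogonal decomposition with components `f 0, f 1, …`: `T_0 = 0` and every object
of `T_{r+1}` fits in a distinguished triangle `b → X → a → b[1]` with `b ∈ f r` and
`a ∈ T_r`. -/
def sodFilt (f : ℕ → Set C) : ℕ → Set C
  | 0 => {X | IsZero X}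
  | (r + 1) => {X | ∃ (B A : C) (u : B ⟶ X) (v : X ⟶ A) (w : A ⟶ B⟦(1 : ℤ)⟧),
      Triangle.mk u v w ∈ (distTriang C) ∧ B ∈ f r ∧ A ∈ sodFilt f r}

namespace K0SODProof

set_option linter.unusedSectionVars false

variable {n : ℕ} (N : Fin n → Set C)

/-- The input filtration data. -/
def fN : ℕ → Set C := fun m => if h : m < n then N ⟨m, h⟩ else ∅

lemma mem_fN {B : C} {r : ℕ} (hB : B ∈ fN N r) (h : r < n) : B ∈ N ⟨r, h⟩ := by
  rwa [fN, dif_pos h] at hB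

lemma fN_of_mem {B : C} {r : ℕ} (h : r < n) (hB : B ∈ N ⟨r, h⟩) : B ∈ fN N r := by
  rwa [fN, dif_pos h]

/-- The class of an object in the relative Grothendieck group. -/
def cls {S : Set C} (X : C) (hX : X ∈ S) : K0In S :=
  QuotientAddGroup.mk' (K0relationsIn S) (FreeAbelianGroup.of ⟨X, hX⟩)

lemma cls_rel {S : Set C} (Tr : Triangle C) (hTr : Tr ∈ distTriang C)
    (h1 : Tr.obj₁ ∈ S) (h2 : Tr.obj₂ ∈ S) (h3 : Tr.obj₃ ∈ S) :
    cls Tr.obj₂ h2 = cls Tr.obj₁ h1 + cls Tr.obj₃ h3 := by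
  have h : cls Tr.obj₂ h2 - cls Tr.obj₁ h1 - cls Tr.obj₃ h3 = 0 := by
    unfold cls
    rw [← map_sub, ← map_sub, QuotientAddGroup.mk'_apply, QuotientAddGroup.eq_zero_iff]
    exact AddSubgroup.subset_closure ⟨Tr, hTr, h1, h2, h3, rfl⟩
  rw [sub_sub, sub_eq_zero] at h
  exact h

/-- The distinguished triangle `X ⟶ Y ⟶ 0` attached to an isomorphism. -/
lemma iso_triangle_dist {X Y : C} (e : X ≅ Y) :
    Triangle.mk e.hom (0 : Y ⟶ 0) (0 : (0 : C) ⟶ X⟦(1 : ℤ)⟧) ∈ distTriang C := by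
  refine isomorphic_distinguished _ (contractible_distinguished X) _ ?_
  exact Triangle.isoMk _ _ (Iso.refl X) e.symm (Iso.refl 0)
    (by show e.hom ≫ e.inv = 𝟙 X ≫ 𝟙 X; simp)
    (by show (0 : Y ⟶ 0) ≫ 𝟙 0 = e.inv ≫ (0 : X ⟶ 0); simp)
    (by show (0 : (0 : C) ⟶ X⟦(1 : ℤ)⟧) ≫ (shiftFunctor C (1 : ℤ)).map (𝟙 X) =
      (𝟙 (0 : C)) ≫ (0 : (0 : C) ⟶ X⟦(1 : ℤ)⟧); simp)

lemma cls_zero {S : Set C} (h0 : (0 : C) ∈ S) : cls (0 : C) h0 = 0 := by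
  have h := cls_rel (contractibleTriangle (0 : C)) (contractible_distinguished _) h0 h0 h0
  exact (add_eq_left.mp h.symm)

lemma cls_iso {S : Set C} (h0 : (0 : C) ∈ S) {X Y : C} (e : X ≅ Y)
    (hX : X ∈ S) (hY : Y ∈ S) : cls X hX = cls Y hY := by
  have h := cls_rel (Triangle.mk e.hom (0 : Y ⟶ 0) (0 : (0 : C) ⟶ X⟦(1 : ℤ)⟧))
    (iso_triangle_dist e) hX hY h0
  dsimp only [Triangle.mk] at h
  rw [cls_zero h0, add_zero] at h
  exact h.symm

lemma cls_isZero {S : Set C} (h0 : (0 : C) ∈ S) {X : C} (hz : IsZero X)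
    (hX : X ∈ S) : cls X hX = 0 := by
  rw [cls_iso h0 hz.isoZero hX h0, cls_zero h0]

/-- The class of an object in the absolute Grothendieck group. -/
def clsC (X : C) : K0 C :=
  QuotientAddGroup.mk' (K0relations C) (FreeAbelianGroup.of X)

lemma clsC_rel (Tr : Triangle C) (hTr : Tr ∈ distTriang C) :
    clsC Tr.obj₂ = clsC Tr.obj₁ + clsC Tr.obj₃ := by
  have h : clsC Tr.obj₂ - clsC Tr.obj₁ - clsC Tr.obj₃ = 0 := by
    unfold clsC
    rw [← map_sub, ← map_sub, QuotientAddGroup.mk'_apply, QuotientAddGroup.eq_zero_iff]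
    exact AddSubgroup.subset_closure ⟨Tr, hTr, rfl⟩
  rw [sub_sub, sub_eq_zero] at h
  exact h

lemma clsC_zero : clsC (0 : C) = 0 := by
  have h := clsC_rel (contractibleTriangle (0 : C)) (contractible_distinguished _)
  exact (add_eq_left.mp h.symm)

lemma clsC_iso {X Y : C} (e : X ≅ Y) : clsC X = clsC Y := by
  have h := clsC_rel (Triangle.mk e.hom (0 : Y ⟶ 0) (0 : (0 : C) ⟶ X⟦(1 : ℤ)⟧))
    (iso_triangle_dist e)
  dsimp only [Triangle.mk] at h
  rw [clsC_zero, add_zero] at h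
  exact h.symm

lemma clsC_isZero {X : C} (hz : IsZero X) : clsC X = 0 := by
  rw [clsC_iso hz.isoZero, clsC_zero]

/-- The filtration is closed under isomorphisms. -/
lemma filt_iso : ∀ {r : ℕ} {X Y : C}, (X ≅ Y) → X ∈ sodFilt (fN N) r →
    Y ∈ sodFilt (fN N) r := by
  intro r X Y e hX
  match r with
  | 0 => exact hX.of_iso e.symm
  | (r+1) =>
    obtain ⟨B, A, u, v, w, hd, hB, hA⟩ := hX
    refine ⟨B, A, u ≫ e.hom, e.inv ≫ v, w, ?_, hB, hA⟩
    refine isomorphic_distinguished _ hd _ ?_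
    exact Triangle.isoMk _ _ (Iso.refl B) e.symm (Iso.refl A)
      (by show (u ≫ e.hom) ≫ e.inv = 𝟙 B ≫ u; simp)
      (by show (e.inv ≫ v) ≫ 𝟙 A = e.inv ≫ v; simp)
      (by show w ≫ (shiftFunctor C (1 : ℤ)).map (𝟙 B) = 𝟙 A ≫ w; simp)

variable (htriang : ∀ r, IsTriangulatedSet (N r))

include htriang

lemma zero_mem_filt : ∀ {r : ℕ}, r ≤ n → ∀ {X : C}, IsZero X → X ∈ sodFilt (fN N) r := by
  intro r
  match r with
  | 0 => exact fun _ _ hX => hX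
  | (r+1) =>
    intro hrn X hX
    exact ⟨0, X, 0, 𝟙 X, 0, contractible_distinguished₁ X,
      fN_of_mem N (by omega) (htriang _).zero, zero_mem_filt (by omega) hX⟩

lemma filt_mono_succ {r : ℕ} (hrn : r + 1 ≤ n) {X : C} (hX : X ∈ sodFilt (fN N) r) :
    X ∈ sodFilt (fN N) (r + 1) := by
  refine ⟨0, X, 0, 𝟙 X, 0, contractible_distinguished₁ X, ?_, hX⟩
  exact fN_of_mem N (by omega) (htriang _).zero

lemma filt_mono {r s : ℕ} (hrs : r ≤ s) (hsn : s ≤ n) {X : C}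
    (hX : X ∈ sodFilt (fN N) r) : X ∈ sodFilt (fN N) s := by
  induction s with
  | zero => rwa [Nat.le_zero.mp hrs] at hX
  | succ s ih =>
    rcases Nat.lt_or_ge r (s+1) with h | h
    · exact filt_mono_succ N htriang hsn (ih (by omega) (by omega))
    · rwa [Nat.le_antisymm hrs h] at hX

lemma shift_filt : ∀ {r : ℕ}, r ≤ n → ∀ {X : C}, X ∈ sodFilt (fN N) r →
    ∀ (k : ℤ), X⟦k⟧ ∈ sodFilt (fN N) r := by
  intro r
  match r with
  | 0 => exact fun _ _ hX k => (shiftFunctor C k).map_isZero hX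
  | (r+1) =>
    intro hrn X hX k
    obtain ⟨B, A, u, v, w, hd, hB, hA⟩ := hX
    have hsh := Triangle.shift_distinguished _ hd k
    have hB' : B⟦k⟧ ∈ fN N r :=
      fN_of_mem N (by omega) ((htriang _).shift _ k (mem_fN N hB (by omega)))
    have hA' : A⟦k⟧ ∈ sodFilt (fN N) r := shift_filt (by omega) hA k
    exact ⟨B⟦k⟧, A⟦k⟧, _, _, _, hsh, hB', hA'⟩

variable (hsemiorth : ∀ i j : Fin n, i < j → ∀ X Y : C, X ∈ N j → Y ∈ N i →
      ∀ f : X ⟶ Y, f = 0)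

include hsemiorth

/-- Semiorthogonality: no maps from `N j` into lower filtration steps. -/
lemma hom_zero_filt : ∀ (r : ℕ) (j : Fin n), r ≤ (j : ℕ) → ∀ {b a : C}, b ∈ N j →
    a ∈ sodFilt (fN N) r → ∀ φ : b ⟶ a, φ = 0 := by
  intro r
  match r with
  | 0 =>
    intro j _ b a _ ha φ
    exact ha.eq_of_tgt φ 0
  | (r+1) =>
    intro j hrj b a hb ha φ
    obtain ⟨B, A, u, v, w, hd, hB, hA⟩ := ha
    have h1 : φ ≫ v = 0 := hom_zero_filt r j (by omega) hb hA (φ ≫ v)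
    obtain ⟨g, hg⟩ := Triangle.coyoneda_exact₂ _ hd φ h1
    have hrn : r < n := by omega
    have hg0 : g = 0 := hsemiorth ⟨r, hrn⟩ j (by simpa [Fin.lt_def] using (by omega : r < (j : ℕ)))
      b B hb (mem_fN N hB hrn) g
    rw [hg, hg0, zero_comp]; rfl

/-- Semiorthogonality with shifted target. -/
lemma hom_zero_filt' (r : ℕ) (j : Fin n) (hrj : r ≤ (j : ℕ)) {b a : C} (hb : b ∈ N j)
    (ha : a ∈ sodFilt (fN N) r) (k : ℤ) (φ : b ⟶ a⟦k⟧) : φ = 0 :=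
  hom_zero_filt N htriang hsemiorth r j hrj hb
    (shift_filt N htriang (le_trans hrj (le_of_lt j.isLt)) ha k) φ

omit htriang hsemiorth

/-- A chosen decomposition triangle for an element of a successor filtration step. -/
noncomputable def dc {r : ℕ} {X : C} (hX : X ∈ sodFilt (fN N) (r+1)) :
    Σ' (B A : C) (u : B ⟶ X) (v : X ⟶ A) (w : A ⟶ B⟦(1 : ℤ)⟧),
      (Triangle.mk u v w ∈ distTriang C) ∧ B ∈ fN N r ∧ A ∈ sodFilt (fN N) r := by
  have h : ∃ (B A : C) (u : B ⟶ X) (v : X ⟶ A) (w : A ⟶ B⟦(1 : ℤ)⟧),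
      (Triangle.mk u v w ∈ distTriang C) ∧ B ∈ fN N r ∧ A ∈ sodFilt (fN N) r := hX
  exact ⟨h.choose, h.choose_spec.choose, h.choose_spec.choose_spec.choose,
    h.choose_spec.choose_spec.choose_spec.choose,
    h.choose_spec.choose_spec.choose_spec.choose_spec.choose,
    h.choose_spec.choose_spec.choose_spec.choose_spec.choose_spec⟩

/-- The component map, defined on each filtration step using chosen decompositions. -/
noncomputable def gg : (r : ℕ) → (X : C) → X ∈ sodFilt (fN N) r →
      ⨁ j : Fin n, K0In (N j)
  | 0, _, _ => 0
  | (r+1), _, hX =>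
    (if h : r < n then
      DirectSum.of (fun j : Fin n => K0In (N j)) ⟨r, h⟩
        (cls (dc N hX).1 (mem_fN N (dc N hX).2.2.2.2.2.2.1 h))
    else 0) + gg r (dc N hX).2.1 (dc N hX).2.2.2.2.2.2.2

lemma gg_succ {r : ℕ} {X : C} (hX : X ∈ sodFilt (fN N) (r+1)) (h : r < n) :
    gg N (r+1) X hX = DirectSum.of (fun j : Fin n => K0In (N j)) ⟨r, h⟩
        (cls (dc N hX).1 (mem_fN N (dc N hX).2.2.2.2.2.2.1 h))
      + gg N r (dc N hX).2.1 (dc N hX).2.2.2.2.2.2.2 := by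
  rw [gg, dif_pos h]

/-- Contravariant exactness at the first shifted spot. -/
lemma yoneda_exact_sh₁ (T : Triangle C) (hT : T ∈ distTriang C) {W : C}
    (f : T.obj₁⟦(1 : ℤ)⟧ ⟶ W) (hf : T.mor₃ ≫ f = 0) :
    ∃ g : T.obj₂⟦(1 : ℤ)⟧ ⟶ W, f = T.mor₁⟦(1 : ℤ)⟧' ≫ g := by
  obtain ⟨g, hg⟩ := Triangle.yoneda_exact₂ _
    (rot_of_distTriang _ (rot_of_distTriang _ hT)) f (by
      dsimp [Triangle.rotate]
      exact hf)
  dsimp [Triangle.rotate] at hg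
  exact ⟨-g, by simp [hg]; exact (Preadditive.neg_comp _ _).trans (Preadditive.comp_neg _ _).symm⟩

/-- Contravariant exactness at the second shifted spot. -/
lemma yoneda_exact_sh₂ (T : Triangle C) (hT : T ∈ distTriang C) {W : C}
    (f : T.obj₂⟦(1 : ℤ)⟧ ⟶ W) (hf : T.mor₁⟦(1 : ℤ)⟧' ≫ f = 0) :
    ∃ g : T.obj₃⟦(1 : ℤ)⟧ ⟶ W, f = T.mor₂⟦(1 : ℤ)⟧' ≫ g := by
  obtain ⟨g, hg⟩ := Triangle.yoneda_exact₂ _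
    (rot_of_distTriang _ (rot_of_distTriang _ (rot_of_distTriang _ hT))) f (by
      dsimp [Triangle.rotate]
      simp [hf]; exact (Preadditive.neg_comp _ _).trans ((congrArg Neg.neg hf).trans neg_zero))
  dsimp [Triangle.rotate] at hg
  exact ⟨-g, by simp [hg]; exact (Preadditive.neg_comp _ _).trans (Preadditive.comp_neg _ _).symm⟩

include htriang hsemiorth in
/-- The key lemma: given a distinguished triangle `X → Y → Z` and decompositions of
`X`, `Y`, `Z` at level `r`, the chosen components fit together: there is a distinguished
triangle `bX → bY → Q` with `Q ≅ bZ` and a distinguished triangle `aX → aY → R` with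
`R ≅ aZ`. -/
lemma interchange {r : ℕ} (hrn : r < n)
    {X Y Z : C} {u : X ⟶ Y} {v : Y ⟶ Z} {w : Z ⟶ X⟦(1 : ℤ)⟧}
    (hT : Triangle.mk u v w ∈ distTriang C)
    {bX aX : C} {iX : bX ⟶ X} {pX : X ⟶ aX} {cX : aX ⟶ bX⟦(1 : ℤ)⟧}
    (hTX : Triangle.mk iX pX cX ∈ distTriang C)
    (hbX : bX ∈ N ⟨r, hrn⟩) (haX : aX ∈ sodFilt (fN N) r)
    {bY aY : C} {iY : bY ⟶ Y} {pY : Y ⟶ aY} {cY : aY ⟶ bY⟦(1 : ℤ)⟧}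
    (hTY : Triangle.mk iY pY cY ∈ distTriang C)
    (hbY : bY ∈ N ⟨r, hrn⟩) (haY : aY ∈ sodFilt (fN N) r)
    {bZ aZ : C} {iZ : bZ ⟶ Z} {pZ : Z ⟶ aZ} {cZ : aZ ⟶ bZ⟦(1 : ℤ)⟧}
    (hTZ : Triangle.mk iZ pZ cZ ∈ distTriang C)
    (hbZ : bZ ∈ N ⟨r, hrn⟩) (haZ : aZ ∈ sodFilt (fN N) r) :
    (∃ (Q : C) (f₁ : bX ⟶ bY) (f₂ : bY ⟶ Q) (f₃ : Q ⟶ bX⟦(1 : ℤ)⟧),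
        (Triangle.mk f₁ f₂ f₃ ∈ distTriang C) ∧ Q ∈ N ⟨r, hrn⟩ ∧ Nonempty (Q ≅ bZ)) ∧
    (∃ (R : C) (g₁ : aX ⟶ aY) (g₂ : aY ⟶ R) (g₃ : R ⟶ aX⟦(1 : ℤ)⟧),
        (Triangle.mk g₁ g₂ g₃ ∈ distTriang C) ∧ Nonempty (R ≅ aZ)) := by
  have h0 : ∀ {b' a' : C}, b' ∈ N ⟨r, hrn⟩ → a' ∈ sodFilt (fN N) r →
      ∀ φ : b' ⟶ a', φ = 0 :=
    fun hb' ha' φ => hom_zero_filt N htriang hsemiorth r _ le_rfl hb' ha' φ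
  have h0s : ∀ {b' a' : C}, b' ∈ N ⟨r, hrn⟩ → a' ∈ sodFilt (fN N) r →
      ∀ (k : ℤ) (φ : b' ⟶ a'⟦k⟧), φ = 0 :=
    fun hb' ha' k φ => hom_zero_filt' N htriang hsemiorth r _ le_rfl hb' ha' k φ
  have hNsh : ∀ {b' : C} (k : ℤ), b' ∈ N ⟨r, hrn⟩ → b'⟦k⟧ ∈ N ⟨r, hrn⟩ :=
    fun k h => (htriang _).shift _ k h
  -- step 1: the map f₁ : bX ⟶ bY
  obtain ⟨f₁, hf₁⟩ : ∃ f₁ : bX ⟶ bY, iX ≫ u = f₁ ≫ iY :=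
    Triangle.coyoneda_exact₂ _ hTY (iX ≫ u) (h0 hbX haY _)
  -- hf₁ : iX ≫ u = f₁ ≫ iY
  -- step 2: its cone Q
  obtain ⟨Q, f₂, f₃, hQT⟩ := distinguished_cocone_triangle f₁
  -- step 3: Q lies in `N r`
  have hQmem : Q ∈ N ⟨r, hrn⟩ :=
    (htriang _).ext₂ _ (rot_of_distTriang _ hQT) hbY (hNsh 1 hbX)
  -- step 4: the comparison map q : Q ⟶ Z
  obtain ⟨q, hq₁, hq₂⟩ : ∃ q : Q ⟶ Z, f₂ ≫ q = iY ≫ v ∧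
      f₃ ≫ iX⟦(1 : ℤ)⟧' = q ≫ w := complete_distinguished_triangle_morphism
    (Triangle.mk f₁ f₂ f₃) (Triangle.mk u v w) hQT hT iX iY hf₁.symm
  -- hq₁ : f₂ ≫ q = iY ≫ v ; hq₂ : f₃ ≫ iX⟦1⟧' = q ≫ w
  -- step 5: factorisation q = q' ≫ iZ
  obtain ⟨q', hq'⟩ : ∃ q' : Q ⟶ bZ, q = q' ≫ iZ :=
    Triangle.coyoneda_exact₂ _ hTZ q (h0 hQmem haZ _)
  -- injectivity helpers
  have injX1 : ∀ {W : C}, W ∈ N ⟨r, hrn⟩ → ∀ (ρ : W ⟶ bX⟦(1 : ℤ)⟧),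
      ρ ≫ iX⟦(1 : ℤ)⟧' = 0 → ρ = 0 := by
    intro W hW ρ hρ
    obtain ⟨g, hg⟩ : ∃ g : W ⟶ aX, ρ = g ≫ cX := Triangle.coyoneda_exact₁ _ hTX ρ hρ
    rw [hg, h0 hW haX g, zero_comp]
  have injY1 : ∀ {W : C}, W ∈ N ⟨r, hrn⟩ → ∀ (ρ : W ⟶ bY⟦(1 : ℤ)⟧),
      ρ ≫ iY⟦(1 : ℤ)⟧' = 0 → ρ = 0 := by
    intro W hW ρ hρ
    obtain ⟨g, hg⟩ : ∃ g : W ⟶ aY, ρ = g ≫ cY := Triangle.coyoneda_exact₁ _ hTY ρ hρ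
    rw [hg, h0 hW haY g, zero_comp]
  have injY0 : ∀ {W : C}, W ∈ N ⟨r, hrn⟩ → ∀ (σ : W ⟶ bY), σ ≫ iY = 0 → σ = 0 := by
    intro W hW σ hσ
    obtain ⟨g, hg⟩ := Triangle.coyoneda_exact₂ _ (inv_rot_of_distTriang _ hTY) σ hσ
    have hg0 : g = 0 := h0s hW haY (-1) g
    rw [hg, hg0, zero_comp]; rfl
  have injZ0 : ∀ {W : C}, W ∈ N ⟨r, hrn⟩ → ∀ (σ : W ⟶ bZ), σ ≫ iZ = 0 → σ = 0 := by
    intro W hW σ hσ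
    obtain ⟨g, hg⟩ := Triangle.coyoneda_exact₂ _ (inv_rot_of_distTriang _ hTZ) σ hσ
    have hg0 : g = 0 := h0s hW haZ (-1) g
    rw [hg, hg0, zero_comp]; rfl
  -- injectivity of composition with q'
  have qinj : ∀ {W : C}, W ∈ N ⟨r, hrn⟩ → ∀ (φ : W ⟶ Q), φ ≫ q' = 0 → φ = 0 := by
    intro W hW φ h
    have hφq : φ ≫ q = 0 := by rw [hq', ← Category.assoc, h, zero_comp]
    have h3 : φ ≫ f₃ = 0 := by
      refine injX1 hW _ ?_
      rw [Category.assoc, hq₂, ← Category.assoc, hφq, zero_comp]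
    obtain ⟨σ, hσ⟩ : ∃ σ : W ⟶ bY, φ = σ ≫ f₂ :=
      Triangle.coyoneda_exact₃ _ hQT φ h3
    -- hσ : φ = σ ≫ f₂
    have hσv : (σ ≫ iY) ≫ v = 0 := by
      rw [Category.assoc, ← hq₁, ← Category.assoc, ← hσ, hφq]
    obtain ⟨τ, hτ⟩ : ∃ τ : W ⟶ X, σ ≫ iY = τ ≫ u :=
      Triangle.coyoneda_exact₂ _ hT (σ ≫ iY) hσv
    -- hτ : σ ≫ iY = τ ≫ u
    obtain ⟨ρ, hρ⟩ : ∃ ρ : W ⟶ bX, τ = ρ ≫ iX :=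
      Triangle.coyoneda_exact₂ _ hTX τ (h0 hW haX _)
    -- hρ : τ = ρ ≫ iX
    have he : (ρ ≫ f₁ - σ) ≫ iY = 0 := by
      rw [Preadditive.sub_comp, Category.assoc, ← hf₁, ← Category.assoc, ← hρ, ← hτ,
        sub_self]
    have hρσ : ρ ≫ f₁ = σ := by
      have h' := injY0 hW _ he
      rwa [sub_eq_zero] at h'
    have hff : f₁ ≫ f₂ = 0 := comp_distTriang_mor_zero₁₂ _ hQT
    rw [hσ, ← hρσ, Category.assoc, hff, comp_zero]
  -- surjectivity of composition with q'
  have qsurj : ∀ {W : C}, W ∈ N ⟨r, hrn⟩ → ∀ (ψ : W ⟶ bZ),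
      ∃ φ : W ⟶ Q, φ ≫ q' = ψ := by
    intro W hW ψ
    have hwu : w ≫ u⟦(1 : ℤ)⟧' = 0 := comp_distTriang_mor_zero₃₁ _ hT
    -- lift (ψ ≫ iZ) ≫ w through iX⟦1⟧
    obtain ⟨g, hg⟩ : ∃ g : W ⟶ bX⟦(1 : ℤ)⟧, (ψ ≫ iZ) ≫ w = g ≫ (-(iX⟦(1 : ℤ)⟧')) :=
      Triangle.coyoneda_exact₁ _ (rot_of_distTriang _ hTX) ((ψ ≫ iZ) ≫ w) (h0s hW haX 1 _)
    -- hg : (ψ ≫ iZ) ≫ w = g ≫ (-(iX⟦1⟧'))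
    have hg' : (-g) ≫ iX⟦(1 : ℤ)⟧' = (ψ ≫ iZ) ≫ w := by
      rw [hg]; exact (Preadditive.neg_comp _ _).trans (Preadditive.comp_neg _ _).symm
    have hb2 : (-g) ≫ f₁⟦(1 : ℤ)⟧' = 0 := by
      refine injY1 hW _ ?_
      have e0 : f₁⟦(1 : ℤ)⟧' ≫ iY⟦(1 : ℤ)⟧' = iX⟦(1 : ℤ)⟧' ≫ u⟦(1 : ℤ)⟧' := by
        rw [← Functor.map_comp, ← Functor.map_comp, hf₁]
      rw [Category.assoc, e0, ← Category.assoc, hg', Category.assoc, hwu, comp_zero]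
    obtain ⟨φ₀, hφ₀⟩ : ∃ φ₀ : W ⟶ Q, -g = φ₀ ≫ f₃ :=
      Triangle.coyoneda_exact₁ _ hQT (-g) hb2
    -- hφ₀ : -g = φ₀ ≫ f₃
    have hd : (φ₀ ≫ q - ψ ≫ iZ) ≫ w = 0 := by
      rw [Preadditive.sub_comp, Category.assoc, ← hq₂, ← Category.assoc, ← hφ₀, hg',
        sub_self]
    obtain ⟨τ, hτ⟩ : ∃ τ : W ⟶ Y, φ₀ ≫ q - ψ ≫ iZ = τ ≫ v :=
      Triangle.coyoneda_exact₃ _ hT _ hd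
    -- hτ : φ₀ ≫ q - ψ ≫ iZ = τ ≫ v
    obtain ⟨σ, hσ⟩ : ∃ σ : W ⟶ bY, τ = σ ≫ iY :=
      Triangle.coyoneda_exact₂ _ hTY τ (h0 hW haY _)
    -- hσ : τ = σ ≫ iY
    refine ⟨φ₀ - σ ≫ f₂, ?_⟩
    have e1 : (φ₀ - σ ≫ f₂) ≫ q = φ₀ ≫ q - τ ≫ v := by
      rw [Preadditive.sub_comp, Category.assoc, hq₁, ← Category.assoc, ← hσ]
    have h7 : ((φ₀ - σ ≫ f₂) ≫ q' - ψ) ≫ iZ = 0 := by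
      rw [Preadditive.sub_comp, Category.assoc, ← hq', e1, ← hτ]
      abel
    have h8 := injZ0 hW _ h7
    rwa [sub_eq_zero] at h8
  -- the isomorphism Q ≅ bZ
  obtain ⟨s, hs⟩ := qsurj hbZ (𝟙 bZ)
  have hq's : q' ≫ s = 𝟙 Q := by
    have h := qinj hQmem (q' ≫ s - 𝟙 Q) (by
      rw [Preadditive.sub_comp, Category.assoc, hs, Category.comp_id, Category.id_comp, sub_self])
    rwa [sub_eq_zero] at h
  refine ⟨⟨Q, f₁, f₂, f₃, hQT, hQmem, ⟨⟨q', s, hq's, hs⟩⟩⟩, ?_⟩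
  -- a-side
  have hiYpY : iY ≫ pY = 0 := comp_distTriang_mor_zero₁₂ _ hTY
  have h1' : iX ≫ (u ≫ pY) = 0 := by
    rw [← Category.assoc, hf₁, Category.assoc, hiYpY, comp_zero]
  obtain ⟨g₁, hg₁⟩ : ∃ g₁ : aX ⟶ aY, u ≫ pY = pX ≫ g₁ :=
    Triangle.yoneda_exact₂ _ hTX (u ≫ pY) h1'
  -- hg₁ : u ≫ pY = pX ≫ g₁
  obtain ⟨R, g₂, g₃, hRT⟩ := distinguished_cocone_triangle g₁
  have hRorth : ∀ {W : C}, W ∈ N ⟨r, hrn⟩ → ∀ φ : W ⟶ R, φ = 0 := by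
    intro W hW φ
    obtain ⟨σ, hσ⟩ : ∃ σ : W ⟶ aY, φ = σ ≫ g₂ :=
      Triangle.coyoneda_exact₃ _ hRT φ (h0s hW haX 1 _)
    rw [hσ, h0 hW haY σ, zero_comp]
  obtain ⟨ζ, hζ₁, hζ₂⟩ : ∃ ζ : Z ⟶ R, v ≫ ζ = pY ≫ g₂ ∧
      w ≫ pX⟦(1 : ℤ)⟧' = ζ ≫ g₃ := complete_distinguished_triangle_morphism
    (Triangle.mk u v w) (Triangle.mk g₁ g₂ g₃) hT hRT pX pY hg₁
  -- hζ₁ : v ≫ ζ = pY ≫ g₂ ; hζ₂ : w ≫ pX⟦1⟧' = ζ ≫ g₃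
  obtain ⟨ζ', hζ'⟩ : ∃ ζ' : aZ ⟶ R, ζ = pZ ≫ ζ' :=
    Triangle.yoneda_exact₂ _ hTZ ζ (hRorth hbZ _)
  -- hζ' : ζ = pZ ≫ ζ'
  have injP : ∀ {b' M a' : C} {i : b' ⟶ M} {p : M ⟶ a'} {c : a' ⟶ b'⟦(1 : ℤ)⟧},
      (Triangle.mk i p c ∈ distTriang C) → b' ∈ N ⟨r, hrn⟩ →
      ∀ {W : C}, (∀ b'', b'' ∈ N ⟨r, hrn⟩ → ∀ φ : b'' ⟶ W, φ = 0) →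
      ∀ (f : a' ⟶ W), p ≫ f = 0 → f = 0 := by
    intro b' M a' i p c hTr hb' W hOW f hf
    obtain ⟨g, hg⟩ : ∃ g : b'⟦(1 : ℤ)⟧ ⟶ W, f = c ≫ g :=
      Triangle.yoneda_exact₂ _ (rot_of_distTriang _ hTr) f hf
    rw [hg, hOW _ (hNsh 1 hb') g, comp_zero]
  have hOaZ : ∀ b'', b'' ∈ N ⟨r, hrn⟩ → ∀ φ : b'' ⟶ aZ, φ = 0 :=
    fun b'' hb'' φ => h0 hb'' haZ φ
  have hOR : ∀ b'', b'' ∈ N ⟨r, hrn⟩ → ∀ φ : b'' ⟶ R, φ = 0 :=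
    fun b'' hb'' φ => hRorth hb'' φ
  -- injectivity of precomposition with ζ'
  have zinj : ∀ {W : C}, (∀ b'', b'' ∈ N ⟨r, hrn⟩ → ∀ φ : b'' ⟶ W, φ = 0) →
      ∀ (φ : R ⟶ W), ζ' ≫ φ = 0 → φ = 0 := by
    intro W hOW φ h
    have hζφ : ζ ≫ φ = 0 := by rw [hζ', Category.assoc, h, comp_zero]
    have h2 : g₂ ≫ φ = 0 := by
      refine injP hTY hbY hOW _ ?_
      rw [← Category.assoc, ← hζ₁, Category.assoc, hζφ, comp_zero]
    obtain ⟨σ, hσ⟩ : ∃ σ : aX⟦(1 : ℤ)⟧ ⟶ W, φ = g₃ ≫ σ :=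
      Triangle.yoneda_exact₃ _ hRT φ h2
    -- hσ : φ = g₃ ≫ σ , σ : aX⟦1⟧ ⟶ W
    have hc : w ≫ (pX⟦(1 : ℤ)⟧' ≫ σ) = 0 := by
      rw [← Category.assoc, hζ₂, Category.assoc, ← hσ, hζφ]
    obtain ⟨τ, hτ⟩ : ∃ τ : Y⟦(1 : ℤ)⟧ ⟶ W, pX⟦(1 : ℤ)⟧' ≫ σ = u⟦(1 : ℤ)⟧' ≫ τ :=
      yoneda_exact_sh₁ _ hT _ hc
    -- hτ : pX⟦1⟧' ≫ σ = u⟦1⟧' ≫ τ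
    have hdz : iY⟦(1 : ℤ)⟧' ≫ τ = 0 := hOW _ (hNsh 1 hbY) _
    obtain ⟨ρ, hρ2⟩ : ∃ ρ : aY⟦(1 : ℤ)⟧ ⟶ W, τ = pY⟦(1 : ℤ)⟧' ≫ ρ :=
      yoneda_exact_sh₂ _ hTY τ hdz
    -- hρ2 : τ = pY⟦1⟧' ≫ ρ
    have e2 : u⟦(1 : ℤ)⟧' ≫ pY⟦(1 : ℤ)⟧' = pX⟦(1 : ℤ)⟧' ≫ g₁⟦(1 : ℤ)⟧' := by
      rw [← Functor.map_comp, ← Functor.map_comp, hg₁]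
    have he : pX⟦(1 : ℤ)⟧' ≫ (σ - g₁⟦(1 : ℤ)⟧' ≫ ρ) = 0 := by
      rw [Preadditive.comp_sub, hτ, hρ2, ← Category.assoc, e2, Category.assoc, sub_self]
    obtain ⟨g, hg2⟩ : ∃ g : (bX⟦(1 : ℤ)⟧)⟦(1 : ℤ)⟧ ⟶ W,
        σ - g₁⟦(1 : ℤ)⟧' ≫ ρ = cX⟦(1 : ℤ)⟧' ≫ g :=
      yoneda_exact_sh₂ _ (rot_of_distTriang _ hTX) _ he
    rw [hOW _ (hNsh 1 (hNsh 1 hbX)) g, comp_zero] at hg2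
    rw [sub_eq_zero] at hg2
    -- hg2 : σ = g₁⟦1⟧' ≫ ρ
    have hgg : g₃ ≫ g₁⟦(1 : ℤ)⟧' = 0 := comp_distTriang_mor_zero₃₁ _ hRT
    rw [hσ, hg2, ← Category.assoc, hgg, zero_comp]
  -- surjectivity of precomposition with ζ'
  have zsurj : ∀ {W : C}, (∀ b'', b'' ∈ N ⟨r, hrn⟩ → ∀ φ : b'' ⟶ W, φ = 0) →
      ∀ (ψ : aZ ⟶ W), ∃ φ : R ⟶ W, ζ' ≫ φ = ψ := by
    intro W hOW ψ
    obtain ⟨σ, hσ⟩ : ∃ σ : aY ⟶ W, v ≫ pZ ≫ ψ = pY ≫ σ :=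
      Triangle.yoneda_exact₂ _ hTY (v ≫ pZ ≫ ψ) (hOW _ hbY _)
    -- hσ : v ≫ pZ ≫ ψ = pY ≫ σ
    have huv : u ≫ v = 0 := comp_distTriang_mor_zero₁₂ _ hT
    have h2s : g₁ ≫ σ = 0 := by
      refine injP hTX hbX hOW _ ?_
      rw [← Category.assoc, ← hg₁, Category.assoc, ← hσ, ← Category.assoc, huv, zero_comp]
    obtain ⟨φ₀, hφ₀⟩ : ∃ φ₀ : R ⟶ W, σ = g₂ ≫ φ₀ :=
      Triangle.yoneda_exact₂ _ hRT σ h2s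
    -- hφ₀ : σ = g₂ ≫ φ₀
    have h4 : v ≫ (ζ ≫ φ₀ - pZ ≫ ψ) = 0 := by
      rw [Preadditive.comp_sub, ← Category.assoc, hζ₁, Category.assoc, ← hφ₀, hσ,
        sub_self]
    obtain ⟨g, hg4⟩ : ∃ g : X⟦(1 : ℤ)⟧ ⟶ W, ζ ≫ φ₀ - pZ ≫ ψ = w ≫ g :=
      Triangle.yoneda_exact₃ _ hT _ h4
    -- hg4 : ζ ≫ φ₀ - pZ ≫ ψ = w ≫ g
    obtain ⟨ρ, hρ5⟩ : ∃ ρ : aX⟦(1 : ℤ)⟧ ⟶ W, g = pX⟦(1 : ℤ)⟧' ≫ ρ :=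
      yoneda_exact_sh₂ _ hTX g (hOW _ (hNsh 1 hbX) _)
    -- hρ5 : g = pX⟦1⟧' ≫ ρ
    refine ⟨φ₀ - g₃ ≫ ρ, ?_⟩
    have h7 : pZ ≫ (ζ' ≫ (φ₀ - g₃ ≫ ρ) - ψ) = 0 := by
      have e3 : ζ ≫ (φ₀ - g₃ ≫ ρ) = pZ ≫ (ζ' ≫ (φ₀ - g₃ ≫ ρ)) := by
        rw [hζ', Category.assoc]
      calc pZ ≫ (ζ' ≫ (φ₀ - g₃ ≫ ρ) - ψ)
          = ζ ≫ (φ₀ - g₃ ≫ ρ) - pZ ≫ ψ := by rw [Preadditive.comp_sub, ← e3]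
        _ = (ζ ≫ φ₀ - pZ ≫ ψ) - ζ ≫ (g₃ ≫ ρ) := by rw [Preadditive.comp_sub]; abel
        _ = w ≫ g - (ζ ≫ g₃) ≫ ρ := by rw [hg4, Category.assoc]
        _ = 0 := by rw [← hζ₂, Category.assoc, ← hρ5, sub_self]
    have h8 := injP hTZ hbZ hOW _ h7
    rwa [sub_eq_zero] at h8
  obtain ⟨s', hs'⟩ := zsurj hOaZ (𝟙 aZ)
  have hs'2 : s' ≫ ζ' = 𝟙 R := by
    have h := zinj hOR (s' ≫ ζ' - 𝟙 R) (by
      rw [Preadditive.comp_sub, ← Category.assoc, hs', Category.comp_id, Category.id_comp, sub_self])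
    rwa [sub_eq_zero] at h
  exact ⟨R, g₁, g₂, g₃, hRT, ⟨⟨s', ζ', hs'2, hs'⟩⟩⟩

include htriang hsemiorth in
set_option maxHeartbeats 1000000 in
/-- Additivity of the component map on distinguished triangles. -/
lemma gg_add : ∀ (r : ℕ), r ≤ n → ∀ (Tr : Triangle C), Tr ∈ (distTriang C) →
    ∀ (h1 : Tr.obj₁ ∈ sodFilt (fN N) r) (h2 : Tr.obj₂ ∈ sodFilt (fN N) r)
      (h3 : Tr.obj₃ ∈ sodFilt (fN N) r),
    gg N r Tr.obj₁ h1 + gg N r Tr.obj₃ h3 = gg N r Tr.obj₂ h2 := by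
  intro r
  induction r with
  | zero =>
    intro _ _ _ _ _ _
    show (0 : ⨁ j : Fin n, K0In (N j)) + 0 = 0
    rw [add_zero]
  | succ r ih =>
    intro hrn Tr hTr h1 h2 h3
    have hrn' : r < n := by omega
    have h0c : (0 : C) ∈ sodFilt (fN N) r :=
      zero_mem_filt N htriang (by omega) (isZero_zero C)
    -- `gg` vanishes on zero objects at level r
    have ihzero : ∀ (X : C) (hz : IsZero X) (hX : X ∈ sodFilt (fN N) r),
        gg N r X hX = 0 := by
      intro X hz hX
      have hz0 : gg N r 0 h0c = 0 := by
        have h := ih (by omega) (contractibleTriangle (0 : C))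
          (contractible_distinguished _) h0c h0c h0c
        have h' : gg N r 0 h0c + gg N r 0 h0c = gg N r 0 h0c := h
        exact add_eq_left.mp h'
      have h := ih (by omega) _ (iso_triangle_dist hz.isoZero) hX h0c h0c
      have h' : gg N r X hX + gg N r 0 h0c = gg N r 0 h0c := h
      rw [hz0, add_zero] at h'
      exact h'
    -- `gg` is invariant under isomorphisms at level r
    have ihiso : ∀ (X Y : C) (e : X ≅ Y) (hX : X ∈ sodFilt (fN N) r)
        (hY : Y ∈ sodFilt (fN N) r), gg N r X hX = gg N r Y hY := by
      intro X Y e hX hY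
      have h := ih (by omega) _ (iso_triangle_dist e) hX hY h0c
      have h' : gg N r X hX + gg N r 0 h0c = gg N r Y hY := h
      rw [ihzero 0 (isZero_zero C) h0c, add_zero] at h'
      exact h'
    -- rewrite the goal using the chosen decompositions
    rw [gg_succ N h1 hrn', gg_succ N h2 hrn', gg_succ N h3 hrn']
    generalize dc N h1 = D1
    generalize dc N h2 = D2
    generalize dc N h3 = D3
    obtain ⟨b1, a1, i1, p1, c1, hT1, hB1, hA1⟩ := D1
    obtain ⟨b2, a2, i2, p2, c2, hT2, hB2, hA2⟩ := D2
    obtain ⟨b3, a3, i3, p3, c3, hT3, hB3, hA3⟩ := D3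
    have hT' : Triangle.mk Tr.mor₁ Tr.mor₂ Tr.mor₃ ∈ distTriang C := hTr
    obtain ⟨⟨Q, f₁, f₂, f₃, hQd, hQm, ⟨eQ⟩⟩, ⟨R, g₁, g₂, g₃, hRd, ⟨eR⟩⟩⟩ :=
      interchange N htriang hsemiorth hrn' hT'
        hT1 (mem_fN N hB1 hrn') hA1
        hT2 (mem_fN N hB2 hrn') hA2
        hT3 (mem_fN N hB3 hrn') hA3
    -- the `b`-side relation in `K0In (N ⟨r, hrn'⟩)`
    have hb : cls b2 (mem_fN N hB2 hrn') =
        cls b1 (mem_fN N hB1 hrn') + cls b3 (mem_fN N hB3 hrn') := by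
      have h := cls_rel (Triangle.mk f₁ f₂ f₃) hQd
        (mem_fN N hB1 hrn') (mem_fN N hB2 hrn') hQm
      have h' : cls b2 (mem_fN N hB2 hrn') = cls b1 (mem_fN N hB1 hrn') + cls Q hQm := h
      rw [h', cls_iso (htriang _).zero eQ hQm (mem_fN N hB3 hrn')]
    -- the `a`-side relation at level r
    have hR : R ∈ sodFilt (fN N) r := filt_iso N eR.symm hA3
    have ha : gg N r a1 hA1 + gg N r a3 hA3 = gg N r a2 hA2 := by
      have h := ih (by omega) (Triangle.mk g₁ g₂ g₃) hRd hA1 hA2 hR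
      have h' : gg N r a1 hA1 + gg N r R hR = gg N r a2 hA2 := h
      rw [ihiso R a3 eR hR hA3] at h'
      exact h'
    rw [hb, map_add, ← ha]
    abel

include htriang hsemiorth in
lemma gg_isZero {r : ℕ} (hrn : r ≤ n) {X : C} (hz : IsZero X)
    (hX : X ∈ sodFilt (fN N) r) : gg N r X hX = 0 := by
  have h0c : (0 : C) ∈ sodFilt (fN N) r := zero_mem_filt N htriang hrn (isZero_zero C)
  have hz0 : gg N r 0 h0c = 0 := by
    have h := gg_add N htriang hsemiorth r hrn (contractibleTriangle (0 : C))
      (contractible_distinguished _) h0c h0c h0c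
    have h' : gg N r 0 h0c + gg N r 0 h0c = gg N r 0 h0c := h
    exact add_eq_left.mp h'
  have h := gg_add N htriang hsemiorth r hrn _ (iso_triangle_dist hz.isoZero) hX h0c h0c
  have h' : gg N r X hX + gg N r 0 h0c = gg N r 0 h0c := h
  rw [hz0, add_zero] at h'
  exact h'

include htriang hsemiorth in
lemma gg_iso {r : ℕ} (hrn : r ≤ n) {X Y : C} (e : X ≅ Y)
    (hX : X ∈ sodFilt (fN N) r) (hY : Y ∈ sodFilt (fN N) r) :
    gg N r X hX = gg N r Y hY := by
  have h0c : (0 : C) ∈ sodFilt (fN N) r := zero_mem_filt N htriang hrn (isZero_zero C)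
  have h := gg_add N htriang hsemiorth r hrn _ (iso_triangle_dist e) hX hY h0c
  have h' : gg N r X hX + gg N r 0 h0c = gg N r Y hY := h
  rw [gg_isZero N htriang hsemiorth hrn (isZero_zero C) h0c, add_zero] at h'
  exact h'

include htriang hsemiorth in
/-- Computation of the component map on objects of `N j`. -/
lemma gg_of_mem : ∀ (r : ℕ), r ≤ n → ∀ (j : Fin n), (j : ℕ) < r →
    ∀ (b : C) (hb : b ∈ N j) (hbT : b ∈ sodFilt (fN N) r),
    gg N r b hbT = DirectSum.of (fun j : Fin n => K0In (N j)) j (cls b hb) := by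
  intro r
  induction r with
  | zero =>
    intro _ j hj b hb hbT
    exact absurd hj (Nat.not_lt_zero _)
  | succ r ih =>
    intro hrn j hjr b hb hbT
    have hrn' : r < n := by omega
    rw [gg_succ N hbT hrn']
    generalize dc N hbT = D
    obtain ⟨B, A, u, v, w, hTd, hB, hA⟩ := D
    rcases Nat.lt_or_ge (j : ℕ) r with hc | hc
    · -- j < r : the `B`-component is zero and `b ≅ A`
      have hu : u = 0 := hsemiorth j ⟨r, hrn'⟩ hc B b (mem_fN N hB hrn') hb u
      have hzB : IsZero B := by
        obtain ⟨g, hg⟩ : ∃ g : B⟦(1 : ℤ)⟧ ⟶ A, 𝟙 (B⟦(1 : ℤ)⟧) = g ≫ w :=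
          Triangle.coyoneda_exact₃ _ (rot_of_distTriang _ hTd) (𝟙 _) (by
            show 𝟙 (B⟦(1 : ℤ)⟧) ≫ (-u⟦(1 : ℤ)⟧') = 0
            rw [hu]
            simp)
        have hg0 : g = 0 := hom_zero_filt N htriang hsemiorth r ⟨r, hrn'⟩ le_rfl
          ((htriang _).shift _ 1 (mem_fN N hB hrn')) hA g
        have hid : 𝟙 (B⟦(1 : ℤ)⟧) = 0 := by rw [hg, hg0, zero_comp]
        rw [IsZero.iff_id_eq_zero]
        apply (shiftFunctor C (1 : ℤ)).map_injective
        rw [CategoryTheory.Functor.map_id, CategoryTheory.Functor.map_zero]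
        exact hid
      have hv : IsIso v := (Triangle.isZero₁_iff_isIso₂ _ hTd).1 hzB
      have e : b ≅ A := asIso v
      have hbTr : b ∈ sodFilt (fN N) r := by
        have h1 : b ∈ sodFilt (fN N) ((j : ℕ) + 1) :=
          ⟨b, 0, 𝟙 b, 0, 0, contractible_distinguished b,
            fN_of_mem N j.isLt hb, zero_mem_filt N htriang (by omega) (isZero_zero C)⟩
        exact filt_mono N htriang (by omega) (by omega) h1
      have hclsB : cls B (mem_fN N hB hrn') = 0 := cls_isZero (htriang _).zero hzB _
      have hggA : gg N r A hA = DirectSum.of (fun j : Fin n => K0In (N j)) j (cls b hb) := by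
        rw [← gg_iso N htriang hsemiorth (by omega) e hbTr hA]
        exact ih (by omega) j hc b hb hbTr
      rw [hclsB, map_zero, zero_add, hggA]
    · -- j = r : `B ≅ b` and `A` is zero
      have hjr' : (j : ℕ) = r := by omega
      have hv0 : v = 0 := hom_zero_filt N htriang hsemiorth r j (by omega) hb hA v
      have hzA : IsZero A := by
        obtain ⟨g, hg⟩ : ∃ g : B⟦(1 : ℤ)⟧ ⟶ A, 𝟙 A = w ≫ g :=
          Triangle.yoneda_exact₂ _ (rot_of_distTriang _ hTd) (𝟙 A) (by
            show v ≫ 𝟙 A = 0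
            rw [hv0, zero_comp])
        have hg0 : g = 0 := hom_zero_filt N htriang hsemiorth r ⟨r, hrn'⟩ le_rfl
          ((htriang _).shift _ 1 (mem_fN N hB hrn')) hA g
        rw [IsZero.iff_id_eq_zero, hg, hg0, comp_zero]
      have hu : IsIso u := (Triangle.isZero₃_iff_isIso₁ _ hTd).1 hzA
      have e : B ≅ b := asIso u
      have hj : j = ⟨r, hrn'⟩ := Fin.ext hjr'
      subst hj
      have hclsB : cls B (mem_fN N hB hrn') = cls b hb :=
        cls_iso (htriang _).zero e _ hb
      have hggA : gg N r A hA = 0 := gg_isZero N htriang hsemiorth (by omega) hzA hA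
      rw [hclsB, hggA, add_zero]

/-- The inclusion map sends a relative class to the absolute class. -/
lemma sodK0Map_of_cls (j : Fin n) {b : C} (hb : b ∈ N j) :
    sodK0Map N (DirectSum.of (fun j : Fin n => K0In (N j)) j (cls b hb)) = clsC b := by
  show (DirectSum.toAddMonoid (fun r => K0inclusion (N r)))
    (DirectSum.of (fun j : Fin n => K0In (N j)) j (cls b hb)) = clsC b
  rw [DirectSum.toAddMonoid_of]
  show K0inclusion (N j) (cls b hb) = clsC b
  unfold K0inclusion cls
  rw [QuotientAddGroup.mk'_apply, QuotientAddGroup.lift_mk']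
  unfold toK0 clsC
  simp [FreeAbelianGroup.lift_apply_of]

include htriang hsemiorth in
/-- `sodK0Map` sends the component class of `X` to the class of `X`. -/
lemma map_gg : ∀ (r : ℕ) (X : C) (hX : X ∈ sodFilt (fN N) r),
    sodK0Map N (gg N r X hX) = clsC X := by
  intro r
  induction r with
  | zero =>
    intro X hX
    have h : gg N 0 X hX = 0 := rfl
    rw [h, map_zero, clsC_isZero hX]
  | succ r ih =>
    intro X hX
    by_cases h : r < n
    · rw [gg_succ N hX h, map_add]
      generalize dc N hX = D
      obtain ⟨B, A, u, v, w, hTd, hB, hA⟩ := D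
      rw [sodK0Map_of_cls N ⟨r, h⟩ (mem_fN N hB h), ih A hA]
      exact (clsC_rel (Triangle.mk u v w) hTd).symm
    · exfalso
      obtain ⟨B, A, u, v, w, hTd, hB, hA⟩ := hX
      rw [fN, dif_neg h] at hB
      exact hB

end K0SODProof

/-- If a triangulated category `C` has a semi-orthogonal decomposition
`C = ⟨N₁, …, Nₙ⟩`, then the Grothendieck group decomposes as
`K₀(C) ≅ K₀(N₁) ⊕ ⋯ ⊕ K₀(Nₙ)`, the isomorphism being induced by the inclusions. -/
theorem k0_direct_sum_of_sod {n : ℕ} (N : Fin n → Set C)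
    (htriang : ∀ r, IsTriangulatedSet (N r))
    (hsemiorth : ∀ i j : Fin n, i < j → ∀ X Y : C, X ∈ N j → Y ∈ N i →
      ∀ f : X ⟶ Y, f = 0)
    (hfilt : ∀ X : C, X ∈ sodFilt (fun m => if h : m < n then N ⟨m, h⟩ else ∅) n) :
    Function.Bijective (sodK0Map N) := by
  classical
  have hfilt' : ∀ X : C, X ∈ sodFilt (K0SODProof.fN N) n := hfilt
  set Ψ : FreeAbelianGroup C →+ (⨁ r : Fin n, K0In (N r)) :=
    FreeAbelianGroup.lift (fun X => K0SODProof.gg N n X (hfilt' X)) with hΨdef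
  have hΨof : ∀ X : C, Ψ (FreeAbelianGroup.of X) = K0SODProof.gg N n X (hfilt' X) :=
    fun X => FreeAbelianGroup.lift_apply_of _ _
  have hker : ∀ x ∈ K0relations C, Ψ x = 0 := by
    intro x hx
    have hle : K0relations C ≤ Ψ.ker := by
      refine (AddSubgroup.closure_le _).mpr ?_
      rintro y ⟨Tr, hTr, rfl⟩
      have hgg := K0SODProof.gg_add N htriang hsemiorth n le_rfl Tr hTr
        (hfilt' _) (hfilt' _) (hfilt' _)
      have hy : Ψ (FreeAbelianGroup.of Tr.obj₂ - FreeAbelianGroup.of Tr.obj₁ -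
          FreeAbelianGroup.of Tr.obj₃) = 0 := by
        rw [map_sub, map_sub, hΨof, hΨof, hΨof, ← hgg]
        abel
      exact hy
    exact hle hx
  set ψ : K0 C →+ (⨁ r : Fin n, K0In (N r)) :=
    QuotientAddGroup.lift (K0relations C) Ψ hker with hψdef
  have hψmk : ∀ z : FreeAbelianGroup C,
      ψ (QuotientAddGroup.mk' (K0relations C) z) = Ψ z := by
    intro z
    rw [QuotientAddGroup.mk'_apply]
    exact QuotientAddGroup.lift_mk _ _ _
  refine Function.bijective_iff_has_inverse.mpr ⟨ψ, ?_, ?_⟩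
  · -- left inverse
    have hcomp : ∀ j : Fin n,
        ψ.comp ((sodK0Map N).comp (DirectSum.of (fun j : Fin n => K0In (N j)) j)) =
          DirectSum.of (fun j : Fin n => K0In (N j)) j := by
      intro j
      refine QuotientAddGroup.addMonoidHom_ext _ ?_
      ext1 x₀
      obtain ⟨b, hb⟩ := x₀
      show ψ (sodK0Map N (DirectSum.of (fun j : Fin n => K0In (N j)) j
        (K0SODProof.cls b hb))) = DirectSum.of (fun j : Fin n => K0In (N j)) j
          (K0SODProof.cls b hb)
      rw [K0SODProof.sodK0Map_of_cls N j hb]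
      have h1 : ψ (K0SODProof.clsC b) = K0SODProof.gg N n b (hfilt' b) := by
        show ψ (QuotientAddGroup.mk' (K0relations C) (FreeAbelianGroup.of b)) = _
        rw [hψmk, hΨof]
      rw [h1, K0SODProof.gg_of_mem N htriang hsemiorth n le_rfl j j.isLt b hb (hfilt' b)]
    have hhom : ψ.comp (sodK0Map N) = AddMonoidHom.id _ := by
      refine DirectSum.addHom_ext ?_
      intro j y
      exact DFunLike.congr_fun (hcomp j) y
    intro x
    exact DFunLike.congr_fun hhom x
  · -- right inverse
    have hhom : (sodK0Map N).comp ψ = AddMonoidHom.id _ := by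
      refine QuotientAddGroup.addMonoidHom_ext _ ?_
      ext X
      show sodK0Map N (ψ (QuotientAddGroup.mk' (K0relations C) (FreeAbelianGroup.of X))) =
        QuotientAddGroup.mk' (K0relations C) (FreeAbelianGroup.of X)
      rw [hψmk, hΨof, K0SODProof.map_gg N htriang hsemiorth n X (hfilt' X)]
      rfl
    intro z
    exact DFunLike.congr_fun hhom z
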